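/- Let K be a commutative ring in which 2 is invertible and a, b ∈ K invertible. In the quaternion algebra A with basis 1, i, j, k, relations i² = a, j² = b, ij = −ji = k, the element R = (1/4)(1⊗1⊗1) + (1/4a)(1⊗i⊗i + i⊗1⊗i + i⊗i⊗1) + (1/4b)(1⊗j⊗j + j⊗1⊗j + j⊗j⊗1) − (1/4ab)(1⊗k⊗k + k⊗1⊗k + k⊗k⊗1) + (1/4ab)(i⊗j⊗k + j⊗k⊗i + k⊗i⊗j) − (1/4ab)(j⊗i⊗k + k⊗j⊗i + i⊗k⊗j) satisfies R¹R²⊗R³ = 1⊗1. -/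

import Mathlib

open TensorProduct Quaternion

namespace QuaternionRMatrix

variable (K : Type*) [CommRing K] (a b : K)

/-- The quaternion unit `i` in `ℍ[K, a, b]` (so `i² = a`). -/
noncomputable def qi : ℍ[K, a, b] := ⟨0, 1, 0, 0⟩

/-- The quaternion unit `j` in `ℍ[K, a, b]` (so `j² = b`). -/
noncomputable def qj : ℍ[K, a, b] := ⟨0, 0, 1, 0⟩

/-- The quaternion unit `k = ij` in `ℍ[K, a, b]`. -/
noncomputable def qk : ℍ[K, a, b] := ⟨0, 0, 0, 1⟩

variable [Invertible (2 : K)] [Invertible a] [Invertible b]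

/-- The canonical R-matrix of the generalized quaternion algebra `A = ℍ[K, a, b]`:
`R = (1/4)(1⊗1⊗1) + (1/4a)(1⊗i⊗i + i⊗1⊗i + i⊗i⊗1) + (1/4b)(1⊗j⊗j + j⊗1⊗j + j⊗j⊗1)
− (1/4ab)(1⊗k⊗k + k⊗1⊗k + k⊗k⊗1) + (1/4ab)(i⊗j⊗k + j⊗k⊗i + k⊗i⊗j)
− (1/4ab)(j⊗i⊗k + k⊗j⊗i + i⊗k⊗j)`. -/
noncomputable def R : ℍ[K, a, b] ⊗[K] (ℍ[K, a, b] ⊗[K] ℍ[K, a, b]) :=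
  let i := qi K a b
  let j := qj K a b
  let k := qk K a b
  let one : ℍ[K, a, b] := 1
  (⅟(2:K) * ⅟(2:K)) • (one ⊗ₜ[K] (one ⊗ₜ[K] one))
  + (⅟(2:K) * ⅟(2:K) * ⅟a) •
      (one ⊗ₜ[K] (i ⊗ₜ[K] i) + i ⊗ₜ[K] (one ⊗ₜ[K] i) + i ⊗ₜ[K] (i ⊗ₜ[K] one))
  + (⅟(2:K) * ⅟(2:K) * ⅟b) •
      (one ⊗ₜ[K] (j ⊗ₜ[K] j) + j ⊗ₜ[K] (one ⊗ₜ[K] j) + j ⊗ₜ[K] (j ⊗ₜ[K] one))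
  - (⅟(2:K) * ⅟(2:K) * ⅟a * ⅟b) •
      (one ⊗ₜ[K] (k ⊗ₜ[K] k) + k ⊗ₜ[K] (one ⊗ₜ[K] k) + k ⊗ₜ[K] (k ⊗ₜ[K] one))
  + (⅟(2:K) * ⅟(2:K) * ⅟a * ⅟b) •
      (i ⊗ₜ[K] (j ⊗ₜ[K] k) + j ⊗ₜ[K] (k ⊗ₜ[K] i) + k ⊗ₜ[K] (i ⊗ₜ[K] j))
  - (⅟(2:K) * ⅟(2:K) * ⅟a * ⅟b) •
      (j ⊗ₜ[K] (i ⊗ₜ[K] k) + k ⊗ₜ[K] (j ⊗ₜ[K] i) + i ⊗ₜ[K] (k ⊗ₜ[K] j))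

/-- Multiplication of the first two tensor factors: `x ⊗ y ⊗ z ↦ xy ⊗ z`. -/
noncomputable def mul12 :
    ℍ[K, a, b] ⊗[K] (ℍ[K, a, b] ⊗[K] ℍ[K, a, b]) →ₗ[K] ℍ[K, a, b] ⊗[K] ℍ[K, a, b] :=
  (TensorProduct.map (LinearMap.mul' K ℍ[K, a, b]) LinearMap.id).comp
    (TensorProduct.assoc K ℍ[K, a, b] ℍ[K, a, b] ℍ[K, a, b]).symm.toLinearMap

variable {K a b} in
lemma qmul_ii : qi K a b * qi K a b = a • 1 := by
  ext <;> simp [qi] <;> ring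
variable {K a b} in
lemma qmul_jj : qj K a b * qj K a b = b • 1 := by
  ext <;> simp [qj] <;> ring
variable {K a b} in
lemma qmul_kk : qk K a b * qk K a b = (-(a*b)) • 1 := by
  ext <;> simp [qk] <;> ring
variable {K a b} in
lemma qmul_ij : qi K a b * qj K a b = qk K a b := by
  ext <;> simp [qi, qj, qk]
variable {K a b} in
lemma qmul_ji : qj K a b * qi K a b = -qk K a b := by
  ext <;> simp [qi, qj, qk]
variable {K a b} in
lemma qmul_jk : qj K a b * qk K a b = (-b) • qi K a b := by
  ext <;> simp [qi, qj, qk]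
variable {K a b} in
lemma qmul_ki : qk K a b * qi K a b = (-a) • qj K a b := by
  ext <;> simp [qi, qj, qk]
variable {K a b} in
lemma qmul_kj : qk K a b * qj K a b = b • qi K a b := by
  ext <;> simp [qi, qj, qk]
variable {K a b} in
lemma qmul_ik : qi K a b * qk K a b = a • qj K a b := by
  ext <;> simp [qi, qj, qk]


/-- In the generalized quaternion algebra `ℍ[K, a, b]` over a
commutative ring `K` in which `2`, `a` and `b` are invertible, the explicit element `R`
above satisfies the normalizing condition `R¹R² ⊗ R³ = 1 ⊗ 1`. -/

theorem quaternion_R_matrix_normalized :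
    mul12 K a b (R K a b) = (1 : ℍ[K, a, b]) ⊗ₜ[K] (1 : ℍ[K, a, b]) := by
  simp only [R, mul12, LinearMap.comp_apply, map_add, map_sub, map_smul,
    LinearEquiv.coe_coe, TensorProduct.assoc_symm_tmul, TensorProduct.map_tmul,
    LinearMap.mul'_apply, LinearMap.id_apply, one_mul, mul_one,
    qmul_ii, qmul_jj, qmul_kk, qmul_ij, qmul_ji, qmul_jk, qmul_ki, qmul_kj, qmul_ik,
    ← TensorProduct.smul_tmul', TensorProduct.neg_tmul, TensorProduct.tmul_neg]
  have h2 : (2:K) * ⅟(2:K) = 1 := mul_invOf_self 2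
  have ha : a * ⅟a = 1 := mul_invOf_self a
  have hb : b * ⅟b = 1 := mul_invOf_self b
  match_scalars
  · linear_combination (⅟(2:K)*⅟(2:K) + ⅟(2:K)*⅟(2:K)*⅟b*b) * ha
      + (2*⅟(2:K)*⅟(2:K)) * hb + (2*⅟(2:K) + 1) * h2
  · linear_combination (-(2*⅟(2:K)*⅟(2:K)*⅟a)) * hb
  · linear_combination (-(2*⅟(2:K)*⅟(2:K)*⅟b)) * ha
  · ring

end QuaternionRMatrix
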